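/- For ε > 0, let H_ε = [[ε², ε], [ε, 1]] ∈ ℝ^{2×2}. Then H_ε is positive semidefinite, the minimum of tr(H_ε LᵀL) over unit upper triangular 2×2 matrices L equals 1, and consequently ‖H_ε‖_off² / (tr(H_ε)·(tr(H_ε) − 1)) = 2/(1 + ε²), which tends to 2 as ε → 0. Hence the constant 1/2 in the bound tr(H LᵀL) ≤ tr(H) − ‖H‖_off²/(2·tr(H)) cannot be improved. -/

import Mathlib

open Matrix

/-- Sharpness of the factor 1/2 in the constrained-LDL bound.
For `ε > 0`, `H_ε = [[ε², ε], [ε, 1]]` is PSD, the minimum of `tr(H_ε LᵀL)` over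
unit upper triangular `2×2` matrices `L` equals `1`, and
`‖H_ε‖_off² / (tr(H_ε)·(tr(H_ε) − 1)) = 2/(1 + ε²)`, which tends to `2` as `ε → 0⁺`. -/
theorem stmt9 :
    (∀ ε : ℝ, 0 < ε →
      (!![ε^2, ε; ε, 1] : Matrix (Fin 2) (Fin 2) ℝ).PosSemidef ∧
      IsLeast {t : ℝ | ∃ L : Matrix (Fin 2) (Fin 2) ℝ,
          (∀ i, L i i = 1) ∧ (∀ i j : Fin 2, j < i → L i j = 0) ∧
          t = Matrix.trace ((!![ε^2, ε; ε, 1] : Matrix (Fin 2) (Fin 2) ℝ) * Lᵀ * L)} 1 ∧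
      (∑ i, ∑ j, if i = j then (0:ℝ)
          else ((!![ε^2, ε; ε, 1] : Matrix (Fin 2) (Fin 2) ℝ) i j)^2) /
        (Matrix.trace (!![ε^2, ε; ε, 1] : Matrix (Fin 2) (Fin 2) ℝ) *
          (Matrix.trace (!![ε^2, ε; ε, 1] : Matrix (Fin 2) (Fin 2) ℝ) - 1))
        = 2 / (1 + ε^2)) ∧
    Filter.Tendsto (fun ε : ℝ => 2 / (1 + ε^2)) (nhdsWithin 0 (Set.Ioi 0)) (nhds 2) := by
  constructor
  · intro ε hε
    refine ⟨?_, ⟨?_, ?_⟩, ?_⟩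
    · rw [Matrix.posSemidef_iff_dotProduct_mulVec]; constructor
      · ext i j
        fin_cases i <;> fin_cases j <;> simp [Matrix.IsHermitian]
      · intro x
        have : (star x) ⬝ᵥ (!![ε^2, ε; ε, 1] : Matrix (Fin 2) (Fin 2) ℝ).mulVec x
            = (ε * x 0 + x 1)^2 := by
          simp [dotProduct, Matrix.mulVec, Fin.sum_univ_two]
          ring
        rw [this]
        positivity
    · refine ⟨!![1, -ε; 0, 1], ?_, ?_, ?_⟩
      · intro i; fin_cases i <;> simp
      · intro i j h; fin_cases i <;> fin_cases j <;> simp_all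
      · simp [Matrix.trace_fin_two, Matrix.mul_apply, Fin.sum_univ_two,
          Matrix.transpose_apply, Matrix.vecMul, dotProduct, Matrix.vecHead, Matrix.vecTail]
        ring
    · rintro t ⟨L, hd, hl, rfl⟩
      have h0 := hd 0
      have h1 := hd 1
      have h2 := hl 1 0 (by decide)
      have : Matrix.trace ((!![ε^2, ε; ε, 1] : Matrix (Fin 2) (Fin 2) ℝ) * Lᵀ * L)
          = 1 + (L 0 1 + ε)^2 := by
        simp [Matrix.trace_fin_two, Matrix.mul_apply, Fin.sum_univ_two,
          Matrix.transpose_apply, Matrix.vecMul, dotProduct,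
          Matrix.vecHead, Matrix.vecTail, h0, h1, h2]
        ring
      rw [this]
      nlinarith [sq_nonneg (L 0 1 + ε)]
    · have hne : (1 : ℝ) + ε^2 ≠ 0 := by positivity
      simp [Fin.sum_univ_two, Matrix.trace_fin_two]
      field_simp
      ring
  · have hc : Continuous fun ε : ℝ => 2 / (1 + ε^2) :=
      continuous_const.div (by continuity) (fun x => by positivity)
    have h := (hc.tendsto 0).mono_left (nhdsWithin_le_nhds (s := Set.Ioi 0))
    norm_num at h
    exact h
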